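/- Let (f_α)_{α∈Ω} be a regular sequence on a commutative ring R indexed by a well-ordered set Ω, and set I = (f_α : α∈Ω)R. Then for every n ∈ ℕ, the quotient I^n/I^{n+1} is a free module over R/I. -/

import Mathlib

noncomputable section

namespace QRAux

variable {R : Type*} [CommRing R] {Ω : Type*}

/-- value of a monomial -/
def mval (f : Ω → R) (ν : Ω →₀ ℕ) : R := ν.prod fun γ k => f γ ^ k

/-- degree of a monomial -/
def mdeg (ν : Ω →₀ ℕ) : ℕ := ν.sum fun _ k => k

/-- ideal generated by a part of the family -/
def IV (f : Ω → R) (V : Set Ω) : Ideal R := Ideal.span (f '' V)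

lemma mval_zero (f : Ω → R) : mval f 0 = 1 := rfl

lemma mdeg_zero : mdeg (0 : Ω →₀ ℕ) = 0 := rfl

lemma mval_add (f : Ω → R) (μ ν : Ω →₀ ℕ) : mval f (μ + ν) = mval f μ * mval f ν := by
  classical
  exact Finsupp.prod_add_index' (fun a => pow_zero _) (fun a b₁ b₂ => pow_add _ _ _)

lemma mdeg_add (μ ν : Ω →₀ ℕ) : mdeg (μ + ν) = mdeg μ + mdeg ν := by
  classical
  exact Finsupp.sum_add_index' (fun a => rfl) (fun a b₁ b₂ => rfl)

lemma mval_single (f : Ω → R) (γ : Ω) (k : ℕ) : mval f (Finsupp.single γ k) = f γ ^ k := by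
  classical
  exact Finsupp.prod_single_index (pow_zero _)

lemma mdeg_single (γ : Ω) (k : ℕ) : mdeg (Finsupp.single γ k) = k := by
  classical
  exact Finsupp.sum_single_index rfl

lemma mdeg_eq_zero {μ : Ω →₀ ℕ} (h : mdeg μ = 0) : μ = 0 := by
  classical
  ext γ
  by_contra hγ
  have hγ' : μ γ ≠ 0 := by simpa using hγ
  have hmem : γ ∈ μ.support := Finsupp.mem_support_iff.2 hγ'
  have := (Finset.sum_eq_zero_iff.1 h) γ hmem
  exact hγ' this

lemma support_nonempty_of_mdeg {μ : Ω →₀ ℕ} {n : ℕ} (h : mdeg μ = n + 1) :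
    μ.support.Nonempty := by
  rcases Finset.eq_empty_or_nonempty μ.support with he | hne
  · exfalso
    have : μ = 0 := Finsupp.support_eq_empty.1 he
    rw [this, mdeg_zero] at h; omega
  · exact hne

lemma sub_single_add {μ : Ω →₀ ℕ} {β : Ω} (h : β ∈ μ.support) :
    (μ - Finsupp.single β 1) + Finsupp.single β 1 = μ := by
  classical
  have hβ : 1 ≤ μ β := Nat.one_le_iff_ne_zero.2 (Finsupp.mem_support_iff.1 h)
  ext γ
  by_cases hγ : γ = β
  · subst hγ
    simp [Finsupp.tsub_apply]
    omega
  · simp [Finsupp.tsub_apply, Finsupp.single_apply, hγ, Ne.symm hγ]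

lemma support_sub_single {μ : Ω →₀ ℕ} {β : Ω} :
    ((μ - Finsupp.single β 1).support : Set Ω) ⊆ (μ.support : Set Ω) := by
  intro γ hγ
  simp only [Finset.coe_subset, Finset.mem_coe, Finsupp.mem_support_iff] at *
  intro h0
  apply hγ
  rw [Finsupp.tsub_apply, h0]
  simp

lemma mdeg_sub_single {μ : Ω →₀ ℕ} {β : Ω} (h : β ∈ μ.support) :
    mdeg (μ - Finsupp.single β 1) + 1 = mdeg μ := by
  conv_rhs => rw [← sub_single_add h]
  rw [mdeg_add, mdeg_single]

lemma mval_sub_single (f : Ω → R) {μ : Ω →₀ ℕ} {β : Ω} (h : β ∈ μ.support) :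
    mval f (μ - Finsupp.single β 1) * f β = mval f μ := by
  conv_rhs => rw [← sub_single_add h]
  rw [mval_add, mval_single, pow_one]

lemma IV_mono (f : Ω → R) {V W : Set Ω} (h : V ⊆ W) : IV f V ≤ IV f W :=
  Ideal.span_mono (Set.image_mono h)

lemma mem_IV (f : Ω → R) {V : Set Ω} {γ : Ω} (h : γ ∈ V) : f γ ∈ IV f V :=
  Ideal.subset_span ⟨γ, h, rfl⟩

lemma mon_mem (f : Ω → R) {V : Set Ω} (ν : Ω →₀ ℕ) (hs : ↑ν.support ⊆ V) :
    mval f ν ∈ IV f V ^ mdeg ν := by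
  classical
  induction ν using Finsupp.induction with
  | zero => simp [mval_zero, mdeg_zero]
  | single_add a b g ha hb ih =>
    have hdisj : Disjoint (Finsupp.single a b).support g.support := by
      simp [Finsupp.support_single_ne_zero a hb, Finset.disjoint_singleton_left, ha]
    have hsupp : ((Finsupp.single a b + g).support : Set Ω)
        = ↑(Finsupp.single a b).support ∪ ↑g.support := by
      rw [Finsupp.support_add_eq hdisj]; simp
    rw [hsupp] at hs
    have haV : a ∈ V := by
      apply hs
      simp [Finsupp.support_single_ne_zero a hb]
    have hgV : ↑g.support ⊆ V := fun x hx => hs (Set.mem_union_right _ hx)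
    rw [mval_add, mdeg_add, mval_single, mdeg_single, pow_add]
    exact Ideal.mul_mem_mul (Ideal.pow_mem_pow (mem_IV f haV) b) (ih hgV)

/-- the set of degree-`m` monomial values with support in `V` -/
def monSet (f : Ω → R) (V : Set Ω) (m : ℕ) : Set R :=
  {x | ∃ ν : Ω →₀ ℕ, ↑ν.support ⊆ V ∧ mdeg ν = m ∧ mval f ν = x}

open Pointwise in
lemma powEq (f : Ω → R) (V : Set Ω) (m : ℕ) :
    IV f V ^ m = Ideal.span (monSet f V m) := by
  classical
  induction m with
  | zero =>
    rw [pow_zero]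
    apply le_antisymm
    · rw [Ideal.one_eq_top, ← Ideal.span_singleton_one]
      apply Ideal.span_mono
      intro x hx
      rcases hx with rfl
      exact ⟨0, by simp, mdeg_zero, mval_zero f⟩
    · exact le_of_le_of_eq le_top (Ideal.one_eq_top).symm
  | succ m ih =>
    rw [pow_succ, ih]
    show Ideal.span (monSet f V m) * Ideal.span (f '' V) = _
    rw [Ideal.span_mul_span']
    apply le_antisymm
    · rw [Ideal.span_le]
      intro x hx
      rcases Set.mem_mul.1 hx with ⟨a, ha, b, hb, rfl⟩
      rcases ha with ⟨ν, hν1, hν2, rfl⟩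
      rcases hb with ⟨γ, hγ, rfl⟩
      apply Ideal.subset_span
      refine ⟨ν + Finsupp.single γ 1, ?_, ?_, ?_⟩
      · intro x hx
        have := Finsupp.support_add (g₁ := ν) (g₂ := Finsupp.single γ 1) (by simpa using hx)
        rcases Finset.mem_union.1 this with h | h
        · exact hν1 h
        · have : x = γ := by
            have := Finsupp.support_single_subset (a := γ) (b := 1) h
            simpa using this
          subst this; exact hγ
      · rw [mdeg_add, hν2, mdeg_single]
      · rw [mval_add, mval_single, pow_one]
    · rw [Ideal.span_le]
      intro x hx
      rcases hx with ⟨ν, hν1, hν2, rfl⟩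
      have hne := support_nonempty_of_mdeg hν2
      obtain ⟨γ, hγ⟩ := hne
      apply Ideal.subset_span
      refine Set.mem_mul.2 ⟨mval f (ν - Finsupp.single γ 1), ?_, f γ, ⟨γ, hν1 hγ, rfl⟩, ?_⟩
      · refine ⟨ν - Finsupp.single γ 1, subset_trans support_sub_single hν1, ?_, rfl⟩
        have := mdeg_sub_single hγ
        omega
      · exact mval_sub_single f hγ

lemma comb_mem (f : Ω → R) {V : Set Ω} {m : ℕ} (t : Finset (Ω →₀ ℕ)) (d : (Ω →₀ ℕ) → R)
    (ht : ∀ ν ∈ t, ↑ν.support ⊆ V ∧ mdeg ν = m) :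
    ∑ ν ∈ t, d ν * mval f ν ∈ IV f V ^ m := by
  apply Ideal.sum_mem
  intro ν hν
  apply Ideal.mul_mem_left
  have := mon_mem f ν (ht ν hν).1
  rwa [(ht ν hν).2] at this

lemma mem_pow_exists (f : Ω → R) {V : Set Ω} {m : ℕ} {x : R} (hx : x ∈ IV f V ^ m) :
    ∃ (t : Finset (Ω →₀ ℕ)) (d : (Ω →₀ ℕ) → R),
      (∀ ν ∈ t, ↑ν.support ⊆ V ∧ mdeg ν = m) ∧ x = ∑ ν ∈ t, d ν * mval f ν := by
  classical
  rw [powEq] at hx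
  obtain ⟨c, hsupp, hsum⟩ := Submodule.mem_span_set.1 hx
  -- choose a monomial for each element of the support of c
  have hch : ∀ z : {z // z ∈ c.support}, ∃ ν : Ω →₀ ℕ,
      ↑ν.support ⊆ V ∧ mdeg ν = m ∧ mval f ν = (z : R) := fun z => hsupp z.2
  choose g hg1 hg2 hg3 using hch
  have ginj : Function.Injective g := by
    intro z₁ z₂ h
    have : (z₁ : R) = (z₂ : R) := by rw [← hg3 z₁, ← hg3 z₂, h]
    exact Subtype.ext this
  refine ⟨c.support.attach.image g, fun ν => c (mval f ν), ?_, ?_⟩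
  · intro ν hν
    rcases Finset.mem_image.1 hν with ⟨z, _, rfl⟩
    exact ⟨hg1 z, hg2 z⟩
  · rw [Finset.sum_image (fun z _ z' _ h => ginj h)]
    have : ∀ z : {z // z ∈ c.support}, c (mval f (g z)) * mval f (g z) = c (z : R) * (z : R) := by
      intro z; rw [hg3 z]
    rw [Finset.sum_congr rfl (fun z _ => this z), ← hsum, Finsupp.sum,
      ← Finset.sum_attach c.support (fun z => c z • z)]
    apply Finset.sum_congr rfl
    intro z _
    rw [smul_eq_mul]

theorem QRle [LinearOrder Ω]
    (hwf : WellFounded ((· < ·) : Ω → Ω → Prop)) (f : Ω → R)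
    (hreg : ∀ α : Ω, ∀ h : R, h * f α ∈ Ideal.span (f '' {β | β < α}) →
      h ∈ Ideal.span (f '' {β | β < α})) :
    ∀ (β : Ω) (n : ℕ) (s : Finset (Ω →₀ ℕ)) (c : (Ω →₀ ℕ) → R),
      (∀ μ ∈ s, mdeg μ = n ∧ (μ.support : Set Ω) ⊆ {γ | γ ≤ β}) →
      (∑ μ ∈ s, c μ * mval f μ) ∈ IV f {γ | γ ≤ β} ^ (n + 1) →
      ∀ μ ∈ s, c μ ∈ IV f {γ | γ ≤ β} := by
  classical
  intro β
  induction β using WellFounded.induction hwf with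
  | _ β IHβ =>
  intro n
  induction n using Nat.strong_induction_on with
  | _ n ihn =>
  set J : Ideal R := IV f {γ | γ < β} with hJdef
  set I' : Ideal R := IV f {γ | γ ≤ β} with hI'def
  have hJI' : J ≤ I' := IV_mono f (fun γ h => le_of_lt h)
  have hfβ : f β ∈ I' := mem_IV f (le_refl β)
  have hregβ : ∀ h : R, h * f β ∈ J → h ∈ J := fun h hh => hreg β h hh
  -- Step A : multiplication by `f β` can be cancelled modulo powers of J
  have F1 : ∀ (m : ℕ) (z : R), z * f β ∈ J ^ m → z ∈ J ^ m := by
    intro m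
    induction m with
    | zero => intro z _; simp
    | succ m ihm =>
      rcases Nat.eq_zero_or_pos m with rfl | hm
      · intro z hz
        rw [pow_one] at hz ⊢
        exact hregβ z hz
      · intro z hz
        have hz' : z ∈ J ^ m := ihm z (Ideal.pow_le_pow_right (Nat.le_succ m) hz)
        obtain ⟨t, d, ht, hzeq⟩ := mem_pow_exists f hz'
        rcases Finset.eq_empty_or_nonempty t with rfl | htne
        · rw [hzeq]; simpa using zero_mem _
        · obtain ⟨t', e, ht', hzfeq⟩ := mem_pow_exists f hz
          set B : Finset Ω := (t ∪ t').sup Finsupp.support with hB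
          have hBne : B.Nonempty := by
            obtain ⟨ν₀, hν₀⟩ := htne
            obtain ⟨γ, hγ⟩ := support_nonempty_of_mdeg (n := m - 1)
              (by rw [(ht ν₀ hν₀).2]; omega)
            exact ⟨γ, Finset.mem_sup.2 ⟨ν₀, Finset.mem_union_left _ hν₀, hγ⟩⟩
          set β' := B.max' hBne with hβ'
          have hβ'lt : β' < β := by
            have hmem' : β' ∈ B := B.max'_mem hBne
            rcases Finset.mem_sup.1 hmem' with ⟨ν, hν, hγν⟩
            rcases Finset.mem_union.1 hν with h | h
            · exact (ht ν h).1 hγν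
            · exact (ht' ν h).1 hγν
          have hcover : ∀ ν ∈ t ∪ t', (ν.support : Set Ω) ⊆ {γ | γ ≤ β'} := by
            intro ν hν γ hγ
            exact B.le_max' γ (Finset.mem_sup.2 ⟨ν, hν, hγ⟩)
          have hsum1 : ∑ ν ∈ t, (d ν * f β) * mval f ν = z * f β := by
            rw [hzeq, Finset.sum_mul]
            apply Finset.sum_congr rfl
            intro ν _; ring
          have hmem1 : ∑ ν ∈ t, (d ν * f β) * mval f ν ∈ IV f {γ | γ ≤ β'} ^ (m + 1) := by
            rw [hsum1, hzfeq]
            exact comb_mem f t' e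
              (fun ν hν => ⟨hcover ν (Finset.mem_union_right _ hν), (ht' ν hν).2⟩)
          have hd : ∀ ν ∈ t, d ν ∈ J := by
            intro ν hν
            have happ := IHβ β' hβ'lt m t (fun ν => d ν * f β)
              (fun ν hν => ⟨(ht ν hν).2, hcover ν (Finset.mem_union_left _ hν)⟩) hmem1 ν hν
            exact hregβ (d ν)
              (IV_mono f (fun γ (hγ : γ ≤ β') => lt_of_le_of_lt hγ hβ'lt) happ)
          rw [hzeq]
          apply Ideal.sum_mem
          intro ν hν
          rw [pow_succ']
          refine Ideal.mul_mem_mul (hd ν hν) ?_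
          have := mon_mem f ν (ht ν hν).1
          rwa [(ht ν hν).2] at this
  -- Step B : splitting powers of I' along `f β`
  have splitPow : ∀ (m : ℕ) (x : R), x ∈ I' ^ (m + 1) →
      ∃ w ∈ J ^ (m + 1), ∃ y ∈ I' ^ m, x = w + f β * y := by
    intro m x hx
    obtain ⟨t, d, ht, hxeq⟩ := mem_pow_exists f hx
    refine ⟨∑ ν ∈ t.filter (fun ν => ¬ (β ∈ ν.support)), d ν * mval f ν, ?_,
      ∑ ν ∈ t.filter (fun ν => β ∈ ν.support), d ν * mval f (ν - Finsupp.single β 1), ?_, ?_⟩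
    · apply comb_mem f _ d
      intro ν hν
      have h1 := ht ν (Finset.mem_filter.1 hν).1
      refine ⟨?_, h1.2⟩
      intro γ hγ
      have hle : γ ≤ β := h1.1 hγ
      have hne : γ ≠ β := fun h => (Finset.mem_filter.1 hν).2 (h ▸ hγ)
      exact lt_of_le_of_ne hle hne
    · apply Ideal.sum_mem
      intro ν hν
      apply Ideal.mul_mem_left
      have h1 := ht ν (Finset.mem_filter.1 hν).1
      have hβν : β ∈ ν.support := (Finset.mem_filter.1 hν).2
      have hdg := mdeg_sub_single (μ := ν) (β := β) hβν
      have : mval f (ν - Finsupp.single β 1) ∈ I' ^ mdeg (ν - Finsupp.single β 1) :=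
        mon_mem f _ (subset_trans support_sub_single h1.1)
      have hm : mdeg (ν - Finsupp.single β 1) = m := by rw [h1.2] at hdg; omega
      rwa [hm] at this
    · rw [hxeq, ← Finset.sum_filter_add_sum_filter_not t (fun ν => β ∈ ν.support)
        (fun ν => d ν * mval f ν), add_comm, Finset.mul_sum]
      congr 1
      apply Finset.sum_congr rfl
      intro ν hν
      rw [← mval_sub_single f (Finset.mem_filter.1 hν).2]
      ring
  -- Step C : cancel `f β` modulo powers of I'
  have F2 : ∀ (m : ℕ) (z : R), z * f β ∈ I' ^ (m + 1) → z ∈ I' ^ m := by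
    intro m z hz
    obtain ⟨w, hw, y, hy, heq⟩ := splitPow m _ hz
    have key : (z - y) * f β ∈ J ^ (m + 1) := by
      have : (z - y) * f β = w := by linear_combination heq
      rw [this]; exact hw
    have h2 := F1 (m + 1) (z - y) key
    have hzy : z = (z - y) + y := by ring
    rw [hzy]
    exact add_mem (Ideal.pow_le_pow_right (Nat.le_succ m) (Ideal.pow_right_mono hJI' (m + 1) h2)) hy
  -- main argument
  rcases n with _ | n
  · intro s c hs hmem μ hμ
    have hμ0 : μ = 0 := mdeg_eq_zero (hs μ hμ).1
    have hsingle : s = {0} := by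
      apply Finset.eq_singleton_iff_unique_mem.2
      exact ⟨hμ0 ▸ hμ, fun x hx => mdeg_eq_zero (hs x hx).1⟩
    rw [hsingle, Finset.sum_singleton, mval_zero, mul_one] at hmem
    rw [hμ0]
    simpa using hmem
  · intro s c hs hmem
    set s₀ := s.filter (fun μ => ¬ (β ∈ μ.support)) with hs₀def
    set s₁ := s.filter (fun μ => β ∈ μ.support) with hs₁def
    set W := ∑ μ ∈ s₁, c μ * mval f (μ - Finsupp.single β 1) with hWdef
    have hsplit : ∑ μ ∈ s, c μ * mval f μ = (∑ μ ∈ s₀, c μ * mval f μ) + f β * W := by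
      rw [hWdef, Finset.mul_sum,
        ← Finset.sum_filter_add_sum_filter_not s (fun μ => β ∈ μ.support)
          (fun μ => c μ * mval f μ), add_comm]
      congr 1
      apply Finset.sum_congr rfl
      intro μ hμ
      rw [← mval_sub_single f (Finset.mem_filter.1 hμ).2]
      ring
    have hsuppt₀ : ∀ μ ∈ s₀, (μ.support : Set Ω) ⊆ {γ | γ < β} := by
      intro μ hμ γ hγ
      have h1 : γ ≤ β := (hs μ (Finset.mem_filter.1 hμ).1).2 hγ
      have h2 : γ ≠ β := fun h => (Finset.mem_filter.1 hμ).2 (h ▸ hγ)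
      exact lt_of_le_of_ne h1 h2
    obtain ⟨w, hw, y, hy, heqX⟩ := splitPow (n + 1) _ hmem
    have hX₀ : (∑ μ ∈ s₀, c μ * mval f μ) ∈ J ^ (n + 1) := by
      apply comb_mem f s₀ c
      intro μ hμ
      exact ⟨hsuppt₀ μ hμ, (hs μ (Finset.mem_filter.1 hμ).1).1⟩
    have hyW : (y - W) * f β ∈ J ^ (n + 1) := by
      have heq2 : (y - W) * f β = (∑ μ ∈ s₀, c μ * mval f μ) - w := by
        linear_combination hsplit - heqX
      rw [heq2]
      exact sub_mem hX₀ (Ideal.pow_le_pow_right (Nat.le_succ _) hw)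
    obtain ⟨th, hcf, hth, hheq⟩ := mem_pow_exists f (F1 (n + 1) _ hyW)
    obtain ⟨tw, e, htw, hweq⟩ := mem_pow_exists f hw
    -- coefficients of the β-free part lie in I'
    have hc₀ : ∀ μ ∈ s₀, c μ ∈ I' := by
      intro μ hμ0
      set u := s₀ ∪ th with hu
      set cc : (Ω →₀ ℕ) → R :=
        fun ν => (if ν ∈ s₀ then c ν else 0) - (if ν ∈ th then f β * hcf ν else 0) with hccdef
      have hueq : ∑ ν ∈ u, cc ν * mval f ν = w := by
        have h1 : ∑ ν ∈ u, cc ν * mval f ν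
            = (∑ ν ∈ u, if ν ∈ s₀ then c ν * mval f ν else 0)
              - (∑ ν ∈ u, if ν ∈ th then (f β * hcf ν) * mval f ν else 0) := by
          rw [← Finset.sum_sub_distrib]
          apply Finset.sum_congr rfl
          intro ν _
          rw [hccdef]
          simp only [ite_mul, zero_mul, sub_mul]
        rw [h1, Finset.sum_ite_mem, Finset.sum_ite_mem, hu,
          Finset.union_inter_cancel_left, Finset.union_inter_cancel_right]
        have h2 : ∑ ν ∈ th, (f β * hcf ν) * mval f ν = f β * (y - W) := by
          rw [hheq, Finset.mul_sum]
          apply Finset.sum_congr rfl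
          intro ν _; ring
        rw [h2]
        linear_combination heqX - hsplit
      set B : Finset Ω := (u ∪ tw).sup Finsupp.support with hB
      have hBne : B.Nonempty := by
        obtain ⟨γ, hγ⟩ := support_nonempty_of_mdeg (hs μ (Finset.mem_filter.1 hμ0).1).1
        exact ⟨γ, Finset.mem_sup.2 ⟨μ, Finset.mem_union_left _ (Finset.mem_union_left _ hμ0), hγ⟩⟩
      set β' := B.max' hBne with hβ'
      have hsubβ : ∀ ν ∈ u ∪ tw, (ν.support : Set Ω) ⊆ {γ | γ < β} := by
        intro ν hν
        rcases Finset.mem_union.1 hν with h | h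
        · rcases Finset.mem_union.1 h with h' | h'
          · exact hsuppt₀ ν h'
          · exact (hth ν h').1
        · exact (htw ν h).1
      have hβ'lt : β' < β := by
        have hmem' : β' ∈ B := B.max'_mem hBne
        rcases Finset.mem_sup.1 hmem' with ⟨ν, hν, hγν⟩
        exact hsubβ ν hν hγν
      have hcover : ∀ ν ∈ u ∪ tw, (ν.support : Set Ω) ⊆ {γ | γ ≤ β'} := by
        intro ν hν γ hγ
        exact B.le_max' γ (Finset.mem_sup.2 ⟨ν, hν, hγ⟩)
      have hdeg : ∀ ν ∈ u, mdeg ν = n + 1 := by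
        intro ν hν
        rcases Finset.mem_union.1 hν with h | h
        · exact (hs ν (Finset.mem_filter.1 h).1).1
        · exact (hth ν h).2
      have hmem2 : ∑ ν ∈ u, cc ν * mval f ν ∈ IV f {γ | γ ≤ β'} ^ (n + 1 + 1) := by
        rw [hueq, hweq]
        exact comb_mem f tw e
          (fun ν hν => ⟨hcover ν (Finset.mem_union_right _ hν), (htw ν hν).2⟩)
      have happ := IHβ β' hβ'lt (n + 1) u cc
        (fun ν hν => ⟨hdeg ν hν, hcover ν (Finset.mem_union_left _ hν)⟩) hmem2 μ
        (Finset.mem_union_left _ hμ0)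
      have hccJ : cc μ ∈ J :=
        IV_mono f (fun γ (hγ : γ ≤ β') => lt_of_le_of_lt hγ hβ'lt) happ
      have hcμ : c μ = cc μ + (if μ ∈ th then f β * hcf μ else 0) := by
        rw [hccdef]
        simp [hμ0]
      rw [hcμ]
      refine add_mem (hJI' hccJ) ?_
      split_ifs
      · exact Ideal.mul_mem_right _ _ hfβ
      · exact zero_mem _
    -- the β-free part lies in I' ^ (n + 2)
    have hX₀' : (∑ μ ∈ s₀, c μ * mval f μ) ∈ I' ^ (n + 1 + 1) := by
      apply Ideal.sum_mem
      intro μ hμ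
      rw [pow_succ']
      refine Ideal.mul_mem_mul (hc₀ μ hμ) ?_
      have := mon_mem f μ (hs μ (Finset.mem_filter.1 hμ).1).2
      rwa [(hs μ (Finset.mem_filter.1 hμ).1).1] at this
    have hWmem : W ∈ I' ^ (n + 1) := by
      apply F2 (n + 1) W
      have : W * f β = (∑ μ ∈ s, c μ * mval f μ) - (∑ μ ∈ s₀, c μ * mval f μ) := by
        linear_combination - hsplit
      rw [this]
      exact sub_mem hmem hX₀'
    -- apply the inner induction hypothesis to the reduced family
    set s' := s₁.image (fun μ => μ - Finsupp.single β 1) with hs'def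
    set c' : (Ω →₀ ℕ) → R := fun ν => c (ν + Finsupp.single β 1) with hc'def
    have hinj : ∀ μ₁ ∈ s₁, ∀ μ₂ ∈ s₁,
        μ₁ - Finsupp.single β 1 = μ₂ - Finsupp.single β 1 → μ₁ = μ₂ := by
      intro μ₁ h₁ μ₂ h₂ h
      have e₁ := sub_single_add (Finset.mem_filter.1 h₁).2
      have e₂ := sub_single_add (Finset.mem_filter.1 h₂).2
      rw [← e₁, ← e₂, h]
    have hsum' : ∑ ν ∈ s', c' ν * mval f ν = W := by
      rw [hs'def, Finset.sum_image hinj, hWdef]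
      apply Finset.sum_congr rfl
      intro μ hμ
      rw [hc'def]
      simp only []
      rw [sub_single_add (Finset.mem_filter.1 hμ).2]
    have hs'hyp : ∀ ν ∈ s', mdeg ν = n ∧ (ν.support : Set Ω) ⊆ {γ | γ ≤ β} := by
      intro ν hν
      rcases Finset.mem_image.1 hν with ⟨μ, hμ, rfl⟩
      have hβμ : β ∈ μ.support := (Finset.mem_filter.1 hμ).2
      have hdg := mdeg_sub_single hβμ
      have hdμ := (hs μ (Finset.mem_filter.1 hμ).1).1
      constructor
      · omega
      · exact subset_trans support_sub_single (hs μ (Finset.mem_filter.1 hμ).1).2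
    have happ2 := ihn n (Nat.lt_succ_self n) s' c' hs'hyp (by rw [hsum']; exact hWmem)
    -- conclusion
    intro μ hμ
    by_cases hβμ : β ∈ μ.support
    · have hμ1 : μ ∈ s₁ := Finset.mem_filter.2 ⟨hμ, hβμ⟩
      have h3 := happ2 (μ - Finsupp.single β 1)
        (Finset.mem_image_of_mem _ hμ1)
      rw [hc'def] at h3
      simp only [] at h3
      rwa [sub_single_add hβμ] at h3
    · exact hc₀ μ (Finset.mem_filter.2 ⟨hμ, hβμ⟩)

theorem quasiReg [LinearOrder Ω]
    (hwf : WellFounded ((· < ·) : Ω → Ω → Prop)) (f : Ω → R)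
    (hreg : ∀ α : Ω, ∀ h : R, h * f α ∈ Ideal.span (f '' {β | β < α}) →
      h ∈ Ideal.span (f '' {β | β < α})) :
    ∀ (n : ℕ) (s : Finset (Ω →₀ ℕ)) (c : (Ω →₀ ℕ) → R),
      (∀ μ ∈ s, mdeg μ = n) →
      (∑ μ ∈ s, c μ * mval f μ) ∈ IV f Set.univ ^ (n + 1) →
      ∀ μ ∈ s, c μ ∈ IV f Set.univ := by
  classical
  intro n s c hs hmem
  obtain ⟨t, d, ht, hteq⟩ := mem_pow_exists f hmem
  set B : Finset Ω := (s ∪ t).sup Finsupp.support with hB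
  rcases Finset.eq_empty_or_nonempty B with hBe | hBne
  · intro μ hμ
    have hzero : ∀ x ∈ s ∪ t, x = 0 := by
      intro x hx
      apply Finsupp.support_eq_empty.1
      apply Finset.eq_empty_iff_forall_notMem.2
      intro γ hγ
      have : γ ∈ B := Finset.mem_sup.2 ⟨x, hx, hγ⟩
      rw [hBe] at this
      simpa using this
    have hμ0 : μ = 0 := hzero μ (Finset.mem_union_left _ hμ)
    have hn : n = 0 := by
      have h4 := (hs μ hμ)
      rw [hμ0, mdeg_zero] at h4
      exact h4.symm
    have hsingle : s = {0} := Finset.eq_singleton_iff_unique_mem.2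
      ⟨hμ0 ▸ hμ, fun x hx => hzero x (Finset.mem_union_left _ hx)⟩
    rw [hsingle, Finset.sum_singleton, mval_zero, mul_one, hn] at hmem
    rw [hμ0]
    simpa using hmem
  · set β := B.max' hBne with hβ
    have hcov : ∀ ν ∈ s ∪ t, (ν.support : Set Ω) ⊆ {γ | γ ≤ β} := by
      intro ν hν γ hγ
      exact B.le_max' γ (Finset.mem_sup.2 ⟨ν, hν, hγ⟩)
    have hres := QRle hwf f hreg β n s c
      (fun μ hμ => ⟨hs μ hμ, hcov μ (Finset.mem_union_left _ hμ)⟩)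
      (by rw [hteq]
          exact comb_mem f t d
            (fun ν hν => ⟨hcov ν (Finset.mem_union_right _ hν), (ht ν hν).2⟩))
    intro μ hμ
    exact IV_mono f (fun γ _ => Set.mem_univ γ) (hres μ hμ)

end QRAux

/-- A regular sequence indexed by an ordered set `(Ω, lt)`:  the quotient by the whole
family is nonzero and each member is a non-zerodivisor modulo the earlier members. -/
def IsRegularSeq {R : Type*} [CommRing R] {Ω : Type*} (lt : Ω → Ω → Prop) (f : Ω → R) : Prop :=
  Ideal.span (Set.range f) ≠ ⊤ ∧
  ∀ α : Ω, ∀ h : R, h * f α ∈ Ideal.span (f '' {β | lt β α}) →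
    h ∈ Ideal.span (f '' {β | lt β α})

/-- The FR-condition: every finite strictly increasing subfamily is a regular sequence
in this order. -/
def SatisfiesFR {R : Type*} [CommRing R] {Ω : Type*} (lt : Ω → Ω → Prop) (f : Ω → R) : Prop :=
  ∀ (n : ℕ) (α : Fin n → Ω), (∀ i j : Fin n, i < j → lt (α i) (α j)) →
    IsRegularSeq (· < ·) (fun i => f (α i))

/-- Corollary 1.18: if `(f_α)` is a regular sequence generating the ideal `I`, then
`Iⁿ/Iⁿ⁺¹` is a free module over `R/I` for every `n`; i.e. there is a family of elements
of `Iⁿ` whose images in `Iⁿ/Iⁿ⁺¹` form a basis over `R/I` (they generate `Iⁿ` modulo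
`Iⁿ⁺¹`, and any `R`-linear combination lying in `Iⁿ⁺¹` has all coefficients in `I`). -/
theorem pow_quotient_free {R : Type u} [CommRing R] {Ω : Type*}
    (lt : Ω → Ω → Prop) (hwo : IsWellOrder Ω lt) (f : Ω → R)
    (hreg : IsRegularSeq lt f) (n : ℕ) :
    ∃ (ι : Type u) (v : ι → R),
      (∀ i, v i ∈ (Ideal.span (Set.range f)) ^ n) ∧
      (∀ x ∈ (Ideal.span (Set.range f)) ^ n, ∃ (s : Finset ι) (c : ι → R),
        x - ∑ i ∈ s, c i * v i ∈ (Ideal.span (Set.range f)) ^ (n + 1)) ∧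
      (∀ (s : Finset ι) (c : ι → R),
        (∑ i ∈ s, c i * v i) ∈ (Ideal.span (Set.range f)) ^ (n + 1) →
          ∀ i ∈ s, c i ∈ Ideal.span (Set.range f)) := by
  classical
  haveI := hwo
  letI : LinearOrder Ω := linearOrderOfSTO lt
  have hwf : WellFounded ((· < ·) : Ω → Ω → Prop) := hwo.toIsWellFounded.wf
  have hreg2 : ∀ α : Ω, ∀ h : R, h * f α ∈ Ideal.span (f '' {β | β < α}) →
      h ∈ Ideal.span (f '' {β | β < α}) := hreg.2
  have hItop : Ideal.span (Set.range f) ≠ ⊤ := hreg.1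
  have hIeq : Ideal.span (Set.range f) = QRAux.IV f Set.univ := by
    rw [QRAux.IV, Set.image_univ]
  have hinj : Function.Injective f := by
    have key : ∀ a b : Ω, a < b → f a ≠ f b := by
      intro a b hab hfe
      have h1 : (1 : R) * f b ∈ Ideal.span (f '' {γ | γ < b}) := by
        rw [one_mul, ← hfe]
        exact Ideal.subset_span ⟨a, hab, rfl⟩
      have h2 := hreg2 b 1 h1
      apply hItop
      rw [Ideal.eq_top_iff_one]
      refine Ideal.span_mono ?_ h2
      rintro x ⟨γ, _, hx⟩
      exact ⟨γ, hx⟩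
    intro a b hfe
    rcases lt_trichotomy a b with h | h | h
    · exact absurd hfe (key a b h)
    · exact h
    · exact absurd hfe.symm (key b a h)
  let e : Ω ≃ Set.range f := Equiv.ofInjective f hinj
  let T : (Ω →₀ ℕ) ≃ ((Set.range f) →₀ ℕ) := Finsupp.equivCongrLeft e
  have hval : ∀ μ : Ω →₀ ℕ, ((T μ).prod fun x k => (x : R) ^ k) = QRAux.mval f μ := by
    intro μ
    rw [show T μ = Finsupp.equivMapDomain e μ from rfl, Finsupp.prod_equivMapDomain]
    apply Finsupp.prod_congr
    intro γ _
    congr 1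
  have hdeg : ∀ μ : Ω →₀ ℕ, ((T μ).sum fun _ k => k) = QRAux.mdeg μ := by
    intro μ
    rw [show T μ = Finsupp.equivMapDomain e μ from rfl, Finsupp.sum_equivMapDomain]
    rfl
  refine ⟨{ρ : (Set.range f) →₀ ℕ // ρ.sum (fun _ k => k) = n},
    fun i => i.1.prod (fun x k => (x : R) ^ k), ?_, ?_, ?_⟩
  · -- each vector lies in I ^ n
    intro i
    beta_reduce
    have h1 : i.1 = T (T.symm i.1) := (T.apply_symm_apply i.1).symm
    rw [hIeq, h1, hval]
    have h2 : QRAux.mdeg (T.symm i.1) = n := by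
      rw [← hdeg, T.apply_symm_apply]
      exact i.2
    have h3 := QRAux.mon_mem f (T.symm i.1) (V := Set.univ) (by intro γ _; trivial)
    rwa [h2] at h3
  · -- spanning modulo I ^ (n+1)
    intro x hx
    beta_reduce
    rw [hIeq] at hx
    obtain ⟨t, d, ht, hteq⟩ := QRAux.mem_pow_exists f hx
    refine ⟨t.attach.image (fun ν => ⟨T ν.1, by rw [hdeg]; exact (ht ν.1 ν.2).2⟩),
      fun i => d (T.symm i.1), ?_⟩
    have hsum : ∑ i ∈ t.attach.image
          (fun ν : {ν // ν ∈ t} => (⟨T ν.1, by rw [hdeg]; exact (ht ν.1 ν.2).2⟩ :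
            {ρ : (Set.range f) →₀ ℕ // ρ.sum (fun _ k => k) = n})),
        d (T.symm i.1) * (i.1.prod fun x k => (x : R) ^ k) = x := by
      rw [Finset.sum_image]
      · rw [hteq, ← Finset.sum_attach t (fun ν => d ν * QRAux.mval f ν)]
        apply Finset.sum_congr rfl
        intro ν _
        simp only [T.symm_apply_apply, hval]
      · intro ν _ ν' _ h
        have := congrArg Subtype.val h
        simp only at this
        exact Subtype.ext (T.injective this)
    rw [hsum]
    rw [sub_self]
    exact zero_mem _
  · -- independence modulo I ^ (n+1)
    intro s c hmem i hi
    beta_reduce at hmem ⊢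
    set c' : (Ω →₀ ℕ) → R := fun μ =>
      if h : ((T μ).sum fun _ k => k) = n then c ⟨T μ, h⟩ else 0 with hc'def
    have hinj2 : ∀ i₁ ∈ s, ∀ i₂ ∈ s, T.symm i₁.1 = T.symm i₂.1 → i₁ = i₂ := by
      intro i₁ _ i₂ _ h
      exact Subtype.ext (T.symm.injective h)
    have hkey : ∀ j : {ρ : (Set.range f) →₀ ℕ // ρ.sum (fun _ k => k) = n},
        c' (T.symm j.1) = c j := by
      intro j
      rw [hc'def]
      simp only [T.apply_symm_apply]
      rw [dif_pos j.2]
    have hsum : ∑ μ ∈ s.image (fun i => T.symm i.1), c' μ * QRAux.mval f μ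
        = ∑ i ∈ s, c i * (i.1.prod fun x k => (x : R) ^ k) := by
      rw [Finset.sum_image hinj2]
      apply Finset.sum_congr rfl
      intro j _
      rw [hkey j, ← hval (T.symm j.1), T.apply_symm_apply]
    have hdeg2 : ∀ μ ∈ s.image (fun i => T.symm i.1), QRAux.mdeg μ = n := by
      intro μ hμ
      rcases Finset.mem_image.1 hμ with ⟨j, _, rfl⟩
      rw [← hdeg, T.apply_symm_apply]
      exact j.2
    have happ := QRAux.quasiReg hwf f hreg2 n (s.image (fun i => T.symm i.1)) c' hdeg2
      (by rw [hsum, ← hIeq]; exact hmem)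
    have h5 := happ (T.symm i.1) (Finset.mem_image_of_mem _ hi)
    rw [hkey i] at h5
    rw [hIeq]
    exact h5


end
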